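/- There is no preorder ≽ on Δ that simultaneously satisfies Pareto, Converse Pareto, Unidimensional Continuity, Unidimensional Certainty Equivalents, Independence, and Negative Dominance. -/

import Mathlib

open scoped BigOperators

noncomputable section

/-- A finite-support lottery on `X`. -/
structure Lottery (X : Type*) where
  val : X →₀ ℝ
  nonneg : ∀ x, 0 ≤ val x
  total : val.sum (fun _ p => p) = 1

namespace Lottery

variable {X : Type*}

/-- The point-mass lottery at `x`. -/
def delta (x : X) : Lottery X where
  val := Finsupp.single x 1
  nonneg := fun y => by
    classical
    rw [Finsupp.single_apply]
    split <;> norm_num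
  total := by
    rw [Finsupp.sum_single_index rfl]

/-- The mixture `α • f + (1 - α) • g`. -/
def mix (α : ℝ) (h1 : 0 ≤ α) (h2 : α ≤ 1) (f g : Lottery X) : Lottery X where
  val := α • f.val + (1 - α) • g.val
  nonneg := fun x => by
    have hf := f.nonneg x
    have hg := g.nonneg x
    simp only [Finsupp.coe_add, Finsupp.coe_smul, Pi.add_apply, Pi.smul_apply, smul_eq_mul]
    nlinarith
  total := by
    rw [Finsupp.sum_add_index' (fun _ => rfl) (fun _ _ _ => rfl)]
    rw [Finsupp.sum_smul_index (fun _ => rfl), Finsupp.sum_smul_index (fun _ => rfl)]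
    rw [← Finsupp.mul_sum, ← Finsupp.mul_sum, f.total, g.total]
    ring

/-- The uniform lottery on `a` and `b`, written `a/b` in the paper. -/
def unif (a b : X) : Lottery X := mix (1/2) (by norm_num) (by norm_num) (delta a) (delta b)

/-- Strict preference. -/
def SPref (R : Lottery X → Lottery X → Prop) (f g : Lottery X) : Prop := R f g ∧ ¬ R g f

/-- Indifference. -/
def Indiff (R : Lottery X → Lottery X → Prop) (f g : Lottery X) : Prop := R f g ∧ R g f

/-- Incomparability. -/
def Incomp (R : Lottery X → Lottery X → Prop) (f g : Lottery X) : Prop := ¬ R f g ∧ ¬ R g f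

/-- Negative Dominance. -/
def NegDominance (R : Lottery X → Lottery X → Prop) : Prop :=
  ∀ f g : Lottery X, SPref R f g →
    ∃ o ∈ f.val.support, ∃ o' ∈ g.val.support, SPref R (delta o) (delta o')

/-- Independence. -/
def Independence (R : Lottery X → Lottery X → Prop) : Prop :=
  ∀ f g h : Lottery X, ∀ α : ℝ, ∀ (h1 : 0 < α) (h2 : α < 1),
    (R f g ↔ R (mix α h1.le h2.le f h) (mix α h1.le h2.le g h))

/-- The coordinatewise expectation of a lottery on `ℝ²`. -/
def expLot (f : Lottery (ℝ × ℝ)) : ℝ × ℝ :=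
  (f.val.sum fun o p => p * o.1, f.val.sum fun o p => p * o.2)

/-- Pareto. -/
def Pareto (R : Lottery (ℝ × ℝ) → Lottery (ℝ × ℝ) → Prop) : Prop :=
  ∀ x y x' y' : ℝ, x' ≤ x → y' ≤ y → R (delta (x, y)) (delta (x', y'))

/-- Converse Pareto. -/
def ConvPareto (R : Lottery (ℝ × ℝ) → Lottery (ℝ × ℝ) → Prop) : Prop :=
  ∀ x y x' y' : ℝ, R (delta (x, y)) (delta (x', y')) → x' ≤ x ∧ y' ≤ y

/-- Two outcomes are unidimensional with each other if they differ in at most one coordinate. -/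
def UniWith {A B : Type*} (o o' : A × B) : Prop := o.1 = o'.1 ∨ o.2 = o'.2

/-- A lottery is unidimensional if any two outcomes in its support are unidimensional
with each other. -/
def Unidim {A B : Type*} (f : Lottery (A × B)) : Prop :=
  ∀ o ∈ f.val.support, ∀ o' ∈ f.val.support, UniWith o o'

/-- Expectationalism. -/
def Expectationalism (R : Lottery (ℝ × ℝ) → Lottery (ℝ × ℝ) → Prop) : Prop :=
  ∀ f, Indiff R f (delta (expLot f))

/-- Unidimensional Expectations. -/
def UnidimExp (R : Lottery (ℝ × ℝ) → Lottery (ℝ × ℝ) → Prop) : Prop :=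
  ∀ f, Unidim f → Indiff R f (delta (expLot f))

end Lottery

open Lottery

/-- Unidimensional Continuity. -/
def UnidimCont (R : Lottery (ℝ × ℝ) → Lottery (ℝ × ℝ) → Prop) : Prop :=
  ∀ a b c : ℝ × ℝ,
    SPref R (delta a) (delta b) → SPref R (delta b) (delta c) →
    UniWith a b → UniWith a c → UniWith b c →
    ∃ f : Lottery (ℝ × ℝ), (f.val.support : Set (ℝ × ℝ)) ⊆ {a, c} ∧ Indiff R f (delta b)

/-- Unidimensional Certainty Equivalents. -/
def UnidimCE (R : Lottery (ℝ × ℝ) → Lottery (ℝ × ℝ) → Prop) : Prop :=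
  ∀ f : Lottery (ℝ × ℝ), Unidim f →
    ∃ ostar : ℝ × ℝ, (∀ o ∈ f.val.support, UniWith ostar o) ∧ Indiff R f (delta ostar) ∧
      ((∃ o ∈ f.val.support, ∃ o' ∈ f.val.support, SPref R (delta o) (delta o')) →
        ∃ o'' ∈ f.val.support, ∃ o''' ∈ f.val.support,
          SPref R (delta o'') (delta ostar) ∧ SPref R (delta ostar) (delta o'''))

namespace S6

open Lottery

/-- All eight assumptions bundled. -/
structure Good (R : Lottery (ℝ × ℝ) → Lottery (ℝ × ℝ) → Prop) : Prop where
  refl : Reflexive R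
  trans : Transitive R
  par : Pareto R
  cpar : ConvPareto R
  ucont : UnidimCont R
  uce : UnidimCE R
  ind : Independence R
  nd : NegDominance R

variable {R : Lottery (ℝ × ℝ) → Lottery (ℝ × ℝ) → Prop}

lemma lottery_ext {f g : Lottery (ℝ × ℝ)} (h : f.val = g.val) : f = g := by
  cases f; cases g; simpa using h

lemma mix_val {α : ℝ} {h1 : 0 ≤ α} {h2 : α ≤ 1} {f g : Lottery (ℝ × ℝ)} (x : ℝ × ℝ) :
    (mix α h1 h2 f g).val x = α * f.val x + (1 - α) * g.val x := by
  show (α • f.val + (1 - α) • g.val) x = _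
  rw [Finsupp.add_apply, Finsupp.smul_apply, Finsupp.smul_apply, smul_eq_mul, smul_eq_mul]

lemma delta_val_self (p : ℝ × ℝ) : (delta p).val p = 1 := Finsupp.single_eq_same

lemma delta_val_ne {p q : ℝ × ℝ} (h : p ≠ q) : (delta p).val q = 0 :=
  Finsupp.single_eq_of_ne' h

lemma mix_self {α : ℝ} {h1 : 0 ≤ α} {h2 : α ≤ 1} {f : Lottery (ℝ × ℝ)} :
    mix α h1 h2 f f = f := by
  apply lottery_ext; ext x; rw [mix_val]; ring

lemma pair_ne_fst {a c b d : ℝ} (h : a ≠ c) : ((a, b) : ℝ × ℝ) ≠ (c, d) :=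
  fun hc => h (congrArg Prod.fst hc)

lemma pair_ne_snd {a c b d : ℝ} (h : b ≠ d) : ((a, b) : ℝ × ℝ) ≠ (c, d) :=
  fun hc => h (congrArg Prod.snd hc)

lemma Rle' (hG : Good R) {a b c d : ℝ} (h1 : c ≤ a) (h2 : d ≤ b) :
    R (delta (a, b)) (delta (c, d)) := hG.par a b c d h1 h2

lemma Rge' (hG : Good R) {a b c d : ℝ} (h : R (delta (a, b)) (delta (c, d))) :
    c ≤ a ∧ d ≤ b := hG.cpar a b c d h

lemma delta_eq' (hG : Good R) {a b c d : ℝ} (h : Indiff R (delta (a, b)) (delta (c, d))) :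
    a = c ∧ b = d := by
  have h1 := Rge' hG h.1
  have h2 := Rge' hG h.2
  exact ⟨le_antisymm h2.1 h1.1, le_antisymm h2.2 h1.2⟩

lemma SPref' (hG : Good R) {a b c d : ℝ} (h1 : c ≤ a) (h2 : d ≤ b)
    (hne : ((a, b) : ℝ × ℝ) ≠ (c, d)) : SPref R (delta (a, b)) (delta (c, d)) := by
  refine ⟨Rle' hG h1 h2, fun hr => hne ?_⟩
  have h3 := Rge' hG hr
  rw [le_antisymm h3.1 h1, le_antisymm h3.2 h2]

lemma ind_iff (hG : Good R) (f g h : Lottery (ℝ × ℝ)) {α : ℝ} (h0 : 0 < α) (h1 : α < 1) :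
    R f g ↔ R (mix α h0.le h1.le f h) (mix α h0.le h1.le g h) :=
  hG.ind f g h α h0 h1

lemma ind_iff₂ (hG : Good R) (f g h : Lottery (ℝ × ℝ)) {α : ℝ} (h0 : 0 < α) (h1 : α < 1) :
    R f g ↔ R (mix α h0.le h1.le h f) (mix α h0.le h1.le h g) := by
  have h0' : (0:ℝ) < 1 - α := by linarith
  have h1' : (1:ℝ) - α < 1 := by linarith
  have e1 : mix (1 - α) h0'.le h1'.le f h = mix α h0.le h1.le h f := by
    apply lottery_ext; ext x; rw [mix_val, mix_val]; ring
  have e2 : mix (1 - α) h0'.le h1'.le g h = mix α h0.le h1.le h g := by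
    apply lottery_ext; ext x; rw [mix_val, mix_val]; ring
  rw [← e1, ← e2]
  exact hG.ind f g h (1 - α) h0' h1'

lemma R_mix_mono (hG : Good R) {f₁ g₁ f₂ g₂ : Lottery (ℝ × ℝ)} {α : ℝ}
    (h0 : 0 < α) (h1 : α < 1) (ha : R f₁ g₁) (hb : R f₂ g₂) :
    R (mix α h0.le h1.le f₁ f₂) (mix α h0.le h1.le g₁ g₂) :=
  hG.trans ((ind_iff hG f₁ g₁ f₂ h0 h1).mp ha) ((ind_iff₂ hG f₂ g₂ g₁ h0 h1).mp hb)

lemma indiff_refl (hG : Good R) (f : Lottery (ℝ × ℝ)) : Indiff R f f := ⟨hG.refl f, hG.refl f⟩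

lemma indiff_symm {f g : Lottery (ℝ × ℝ)} (h : Indiff R f g) : Indiff R g f := ⟨h.2, h.1⟩

lemma indiff_trans (hG : Good R) {f g h : Lottery (ℝ × ℝ)} (h1 : Indiff R f g)
    (h2 : Indiff R g h) : Indiff R f h := ⟨hG.trans h1.1 h2.1, hG.trans h2.2 h1.2⟩

lemma indiff_mix_mono (hG : Good R) {f₁ g₁ f₂ g₂ : Lottery (ℝ × ℝ)} {α : ℝ}
    (h0 : 0 < α) (h1 : α < 1) (ha : Indiff R f₁ g₁) (hb : Indiff R f₂ g₂) :
    Indiff R (mix α h0.le h1.le f₁ f₂) (mix α h0.le h1.le g₁ g₂) :=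
  ⟨R_mix_mono hG h0 h1 ha.1 hb.1, R_mix_mono hG h0 h1 ha.2 hb.2⟩

lemma SPref_mix (hG : Good R) {f g h : Lottery (ℝ × ℝ)} {α : ℝ} (h0 : 0 < α) (h1 : α < 1)
    (hs : SPref R f g) : SPref R (mix α h0.le h1.le f h) (mix α h0.le h1.le g h) :=
  ⟨(ind_iff hG f g h h0 h1).mp hs.1, fun hr => hs.2 ((ind_iff hG g f h h0 h1).mpr hr)⟩

lemma mix_delta_support {α : ℝ} {h1 : 0 ≤ α} {h2 : α ≤ 1} {p q x : ℝ × ℝ}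
    (hx : x ∈ (mix α h1 h2 (delta p) (delta q)).val.support) : x = p ∨ x = q := by
  by_contra hc
  push_neg at hc
  apply Finsupp.mem_support_iff.mp hx
  rw [mix_val, delta_val_ne (Ne.symm hc.1), delta_val_ne (Ne.symm hc.2)]
  ring

lemma mem_mix_support_left {α : ℝ} {h1 : 0 ≤ α} {h2 : α ≤ 1} {p q : ℝ × ℝ}
    (hα : 0 < α) (hpq : p ≠ q) : p ∈ (mix α h1 h2 (delta p) (delta q)).val.support := by
  apply Finsupp.mem_support_iff.mpr
  rw [mix_val, delta_val_self, delta_val_ne (Ne.symm hpq)]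
  intro h
  simp only [mul_one, mul_zero, add_zero] at h
  exact absurd h (ne_of_gt hα)

lemma mem_mix_support_right {α : ℝ} {h1 : 0 ≤ α} {h2 : α ≤ 1} {p q : ℝ × ℝ}
    (hα : α < 1) (hpq : p ≠ q) : q ∈ (mix α h1 h2 (delta p) (delta q)).val.support := by
  apply Finsupp.mem_support_iff.mpr
  rw [mix_val, delta_val_ne hpq, delta_val_self]
  intro h
  simp only [mul_one, mul_zero, zero_add] at h
  have : (0:ℝ) < 1 - α := by linarith
  exact absurd h (ne_of_gt this)

lemma eq_mix_of_support_subset {f : Lottery (ℝ × ℝ)} {p q : ℝ × ℝ} (hpq : p ≠ q)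
    (hsupp : (f.val.support : Set (ℝ × ℝ)) ⊆ {p, q}) :
    ∃ w, ∃ (h0 : 0 ≤ w) (h1 : w ≤ 1), f = mix w h0 h1 (delta p) (delta q) := by
  classical
  have hsub : f.val.support ⊆ {p, q} := by
    intro x hx
    have hx' := hsupp (Finset.mem_coe.mpr hx)
    simp only [Set.mem_insert_iff, Set.mem_singleton_iff] at hx'
    simp only [Finset.mem_insert, Finset.mem_singleton]
    exact hx'
  have hsum : f.val p + f.val q = 1 := by
    have h := f.total
    rw [Finsupp.sum_of_support_subset f.val hsub (fun _ m => m) (fun i _ => rfl)] at h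
    rwa [Finset.sum_pair hpq] at h
  have hqn := f.nonneg q
  have hpn := f.nonneg p
  refine ⟨f.val p, hpn, by linarith, ?_⟩
  apply lottery_ext; ext x
  rw [mix_val]
  by_cases hp : x = p
  · subst hp
    rw [delta_val_self, delta_val_ne (Ne.symm hpq)]
    ring
  · by_cases hq : x = q
    · subst hq
      rw [delta_val_ne hpq, delta_val_self]
      linarith
    · have hx0 : f.val x = 0 := by
        by_contra h0
        have := hsub (Finsupp.mem_support_iff.mpr h0)
        simp only [Finset.mem_insert, Finset.mem_singleton] at this
        tauto
      rw [hx0, delta_val_ne (Ne.symm hp), delta_val_ne (Ne.symm hq)]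
      ring

end S6

namespace S6

variable {R : Lottery (ℝ × ℝ) → Lottery (ℝ × ℝ) → Prop}
open Lottery

lemma lt_of_SPref_row (hG : Good R) {a t y : ℝ} (h : SPref R (delta (a, y)) (delta (t, y))) :
    t < a := by
  by_contra hc
  push_neg at hc
  exact h.2 (Rle' hG hc (le_refl y))

lemma lt_of_SPref_col (hG : Good R) {b s x : ℝ} (h : SPref R (delta (x, b)) (delta (x, s))) :
    s < b := by
  by_contra hc
  push_neg at hc
  exact h.2 (Rle' hG (le_refl x) hc)

/-- Certainty equivalent of a two-point lottery on a horizontal line. -/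
lemma row_CE (hG : Good R) {y x₁ x₂ w : ℝ} (hx : x₂ < x₁) (h0 : 0 < w) (h1 : w < 1) :
    ∃ t, x₂ < t ∧ t < x₁ ∧
      Indiff R (mix w h0.le h1.le (delta (x₁, y)) (delta (x₂, y))) (delta (t, y)) := by
  have hpq : ((x₁, y) : ℝ × ℝ) ≠ (x₂, y) := pair_ne_fst hx.ne'
  have hmem₁ : ((x₁, y) : ℝ × ℝ) ∈
      (mix w h0.le h1.le (delta (x₁, y)) (delta (x₂, y))).val.support :=
    mem_mix_support_left h0 hpq
  have hmem₂ : ((x₂, y) : ℝ × ℝ) ∈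
      (mix w h0.le h1.le (delta (x₁, y)) (delta (x₂, y))).val.support :=
    mem_mix_support_right h1 hpq
  have hUni : Unidim (mix w h0.le h1.le (delta (x₁, y)) (delta (x₂, y))) := by
    intro o ho o' ho'
    rcases mix_delta_support ho with h | h <;> rcases mix_delta_support ho' with h' | h' <;>
      subst h <;> subst h' <;> exact Or.inr rfl
  obtain ⟨os, hosU, hosI, hmore⟩ := hG.uce _ hUni
  have hos2 : os.2 = y := by
    rcases hosU _ hmem₁ with h | h
    · rcases hosU _ hmem₂ with h' | h'
      · exact absurd (h.symm.trans h') hx.ne'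
      · exact h'
    · exact h
  obtain ⟨t, hos⟩ : ∃ t, os = (t, y) := ⟨os.1, by rw [← hos2]⟩
  subst hos
  obtain ⟨o1, ho1, o2, ho2, hs1, hs2⟩ := hmore
    ⟨(x₁, y), hmem₁, (x₂, y), hmem₂, SPref' hG hx.le (le_refl y) hpq⟩
  refine ⟨t, ?_, ?_, hosI⟩
  · rcases mix_delta_support ho2 with h | h <;> subst h
    · have := lt_of_SPref_row hG hs2; linarith
    · exact lt_of_SPref_row hG hs2
  · rcases mix_delta_support ho1 with h | h <;> subst h
    · exact lt_of_SPref_row hG hs1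
    · have := lt_of_SPref_row hG hs1; linarith

/-- Certainty equivalent of a two-point lottery on a vertical line. -/
lemma col_CE (hG : Good R) {x y₁ y₂ w : ℝ} (hy : y₂ < y₁) (h0 : 0 < w) (h1 : w < 1) :
    ∃ s, y₂ < s ∧ s < y₁ ∧
      Indiff R (mix w h0.le h1.le (delta (x, y₁)) (delta (x, y₂))) (delta (x, s)) := by
  have hpq : ((x, y₁) : ℝ × ℝ) ≠ (x, y₂) := pair_ne_snd hy.ne'
  have hmem₁ : ((x, y₁) : ℝ × ℝ) ∈
      (mix w h0.le h1.le (delta (x, y₁)) (delta (x, y₂))).val.support :=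
    mem_mix_support_left h0 hpq
  have hmem₂ : ((x, y₂) : ℝ × ℝ) ∈
      (mix w h0.le h1.le (delta (x, y₁)) (delta (x, y₂))).val.support :=
    mem_mix_support_right h1 hpq
  have hUni : Unidim (mix w h0.le h1.le (delta (x, y₁)) (delta (x, y₂))) := by
    intro o ho o' ho'
    rcases mix_delta_support ho with h | h <;> rcases mix_delta_support ho' with h' | h' <;>
      subst h <;> subst h' <;> exact Or.inl rfl
  obtain ⟨os, hosU, hosI, hmore⟩ := hG.uce _ hUni
  have hos1 : os.1 = x := by
    rcases hosU _ hmem₁ with h | h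
    · exact h
    · rcases hosU _ hmem₂ with h' | h'
      · exact h'
      · exact absurd (h.symm.trans h') hy.ne'
  obtain ⟨s, hos⟩ : ∃ s, os = (x, s) := ⟨os.2, by rw [← hos1]⟩
  subst hos
  obtain ⟨o1, ho1, o2, ho2, hs1, hs2⟩ := hmore
    ⟨(x, y₁), hmem₁, (x, y₂), hmem₂, SPref' hG (le_refl x) hy.le hpq⟩
  refine ⟨s, ?_, ?_, hosI⟩
  · rcases mix_delta_support ho2 with h | h <;> subst h
    · have := lt_of_SPref_col hG hs2; linarith
    · exact lt_of_SPref_col hG hs2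
  · rcases mix_delta_support ho1 with h | h <;> subst h
    · exact lt_of_SPref_col hG hs1
    · have := lt_of_SPref_col hG hs1; linarith

/-- Unidimensional continuity pins a mixture at any intermediate target on a row. -/
lemma pin_row (hG : Good R) {y x₁ x₂ t : ℝ} (h2 : x₂ < t) (h1 : t < x₁) :
    ∃ w, ∃ (hw0 : 0 < w) (hw1 : w < 1),
      Indiff R (mix w hw0.le hw1.le (delta (x₁, y)) (delta (x₂, y))) (delta (t, y)) := by
  have hne1 : ((x₁, y) : ℝ × ℝ) ≠ (t, y) := pair_ne_fst h1.ne'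
  have hne2 : ((t, y) : ℝ × ℝ) ≠ (x₂, y) := pair_ne_fst h2.ne'
  have hne3 : ((x₁, y) : ℝ × ℝ) ≠ (x₂, y) := pair_ne_fst (h2.trans h1).ne'
  obtain ⟨f, hsupp, hind⟩ := hG.ucont (x₁, y) (t, y) (x₂, y)
    (SPref' hG h1.le (le_refl y) hne1) (SPref' hG h2.le (le_refl y) hne2)
    (Or.inr rfl) (Or.inr rfl) (Or.inr rfl)
  obtain ⟨w, hw0, hw1, hfeq⟩ := eq_mix_of_support_subset hne3 hsupp
  rw [hfeq] at hind
  rcases eq_or_lt_of_le hw0 with h | h0'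
  · exfalso
    have heq : mix w hw0 hw1 (delta (x₁, y)) (delta (x₂, y)) = delta (x₂, y) := by
      apply lottery_ext; ext z; rw [mix_val, ← h]; ring
    rw [heq] at hind
    exact absurd (delta_eq' hG hind).1 h2.ne
  · rcases eq_or_lt_of_le hw1 with h | h1'
    · exfalso
      have heq : mix w hw0 hw1 (delta (x₁, y)) (delta (x₂, y)) = delta (x₁, y) := by
        apply lottery_ext; ext z; rw [mix_val, h]; ring
      rw [heq] at hind
      exact absurd (delta_eq' hG hind).1 h1.ne'
    · exact ⟨w, h0', h1', hind⟩

/-- Strict monotonicity of the certainty equivalent in the mixture weight. -/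
lemma row_CE_lt (hG : Good R) {y x₁ x₂ w w' t t' : ℝ} (hx : x₂ < x₁)
    (hw0 : 0 < w) (hww' : w < w') (hw'1 : w' < 1)
    {pw0 : 0 ≤ w} {pw1 : w ≤ 1} {pw0' : 0 ≤ w'} {pw1' : w' ≤ 1}
    (ht : Indiff R (mix w pw0 pw1 (delta (x₁, y)) (delta (x₂, y))) (delta (t, y)))
    (ht' : Indiff R (mix w' pw0' pw1' (delta (x₁, y)) (delta (x₂, y))) (delta (t', y)))
    (htx : t < x₁) : t < t' := by
  have h1w : (1:ℝ) - w ≠ 0 := by intro h; nlinarith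
  have hθ0 : 0 < (w' - w) / (1 - w) := by
    apply div_pos <;> linarith
  have hθ1 : (w' - w) / (1 - w) < 1 := by
    rw [div_lt_one (by linarith)]; linarith
  have hkey : mix w' pw0' pw1' (delta (x₁, y)) (delta (x₂, y)) =
      mix ((w' - w) / (1 - w)) hθ0.le hθ1.le (delta (x₁, y))
        (mix w pw0 pw1 (delta (x₁, y)) (delta (x₂, y))) := by
    apply lottery_ext; ext z
    simp only [mix_val]
    field_simp
    ring
  have hSB : SPref R (delta (x₁, y)) (mix w pw0 pw1 (delta (x₁, y)) (delta (x₂, y))) := by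
    constructor
    · exact hG.trans (Rle' hG htx.le (le_refl y)) ht.2
    · intro hr
      have h3 := Rge' hG (hG.trans ht.2 hr)
      linarith [h3.1]
  have hstep := SPref_mix hG hθ0 hθ1
    (h := mix w pw0 pw1 (delta (x₁, y)) (delta (x₂, y))) hSB
  rw [mix_self] at hstep
  rw [← hkey] at hstep
  have hfinal : SPref R (delta (t', y)) (delta (t, y)) := by
    constructor
    · exact hG.trans (hG.trans ht'.2 hstep.1) ht.1
    · intro hr
      exact hstep.2 (hG.trans (hG.trans ht.1 hr) ht'.2)
  exact lt_of_SPref_row hG hfinal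

lemma row_CE_le (hG : Good R) {y x₁ x₂ w w' t t' : ℝ} (hx : x₂ < x₁)
    (hw0 : 0 < w) (hww' : w ≤ w') (hw'1 : w' < 1)
    {pw0 : 0 ≤ w} {pw1 : w ≤ 1} {pw0' : 0 ≤ w'} {pw1' : w' ≤ 1}
    (ht : Indiff R (mix w pw0 pw1 (delta (x₁, y)) (delta (x₂, y))) (delta (t, y)))
    (ht' : Indiff R (mix w' pw0' pw1' (delta (x₁, y)) (delta (x₂, y))) (delta (t', y)))
    (htx : t < x₁) : t ≤ t' := by
  rcases eq_or_lt_of_le hww' with h | h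
  · subst h
    exact (delta_eq' hG (indiff_trans hG (indiff_symm ht) ht')).1.le
  · exact (row_CE_lt hG hx hw0 h hw'1 ht ht' htx).le

/-- The certainty equivalent of the same gamble on a higher row is at least as large. -/
lemma row_CE_cross (hG : Good R) {w y y' t t' : ℝ} (h0 : 0 < w) (h1 : w < 1) (hyy : y' ≤ y)
    {p1 : 0 ≤ w} {p2 : w ≤ 1} {p3 : 0 ≤ w} {p4 : w ≤ 1}
    (ht : Indiff R (mix w p1 p2 (delta (1, y)) (delta (0, y))) (delta (t, y)))
    (ht' : Indiff R (mix w p3 p4 (delta (1, y')) (delta (0, y'))) (delta (t', y'))) :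
    t' ≤ t := by
  have hmono : R (mix w h0.le h1.le (delta (1, y)) (delta (0, y)))
      (mix w h0.le h1.le (delta (1, y')) (delta (0, y'))) :=
    R_mix_mono hG h0 h1 (Rle' hG (le_refl 1) hyy) (Rle' hG (le_refl 0) hyy)
  have hfin : R (delta (t, y)) (delta (t', y')) :=
    hG.trans (hG.trans ht.2 hmono) ht'.1
  exact (Rge' hG hfin).1

/-- The negative-dominance "box" contradiction. -/
lemma box (hG : Good R) {τ₀ τ₁ z γ : ℝ} (h1 : τ₁ < z) (h3 : 0 < γ)
    {s1 : (0:ℝ) ≤ 1/2} {s2 : (1:ℝ)/2 ≤ 1}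
    (hQz : R (mix (1/2) s1 s2 (delta (τ₀, 0)) (delta (τ₁, 1))) (delta (z, γ))) : False := by
  have hm : 0 < min (z - τ₁) γ := lt_min (by linarith) h3
  have hε1 : min (z - τ₁) γ / 2 < z - τ₁ := by
    have := min_le_left (z - τ₁) γ; linarith
  have hε2 : min (z - τ₁) γ / 2 < γ := by
    have := min_le_right (z - τ₁) γ; linarith
  have hSz : SPref R (mix (1/2) s1 s2 (delta (τ₀, 0)) (delta (τ₁, 1)))
      (delta (z - min (z - τ₁) γ / 2, γ - min (z - τ₁) γ / 2)) := by
    constructor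
    · exact hG.trans hQz (Rle' hG (by linarith) (by linarith))
    · intro hr
      have := Rge' hG (hG.trans hr hQz)
      linarith [this.1]
  obtain ⟨o, ho, o', ho', hoo'⟩ := hG.nd _ _ hSz
  have ho'eq : o' = (z - min (z - τ₁) γ / 2, γ - min (z - τ₁) γ / 2) := by
    by_contra hne
    exact (Finsupp.mem_support_iff.mp ho') (delta_val_ne (Ne.symm hne))
  subst ho'eq
  have hoQ : o = (τ₀, 0) ∨ o = (τ₁, 1) := by
    by_contra hcon
    push_neg at hcon
    apply Finsupp.mem_support_iff.mp ho
    rw [mix_val, delta_val_ne (Ne.symm hcon.1), delta_val_ne (Ne.symm hcon.2)]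
    ring
  rcases hoQ with h | h <;> subst h
  · have := (Rge' hG hoo'.1).2
    linarith
  · have := (Rge' hG hoo'.1).1
    linarith

end S6

namespace S6

variable {R : Lottery (ℝ × ℝ) → Lottery (ℝ × ℝ) → Prop}
open Lottery

/-- Bridge lemma, case γ₀ ≤ γ₁ : from the pinned row-lottery at height γ₀ with weight
lam < m₁ we can cancel a bridge lottery and conclude `P ≽ δ(z,γ₀)`. -/
lemma bridge_I (hG : Good R) {m₁ γ₀ γ₁ z lam : ℝ}
    (hm0 : 0 < m₁) (hm1 : m₁ < 1) (hγ : γ₀ ≤ γ₁) (hz0 : 0 ≤ z)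
    (hl0 : 0 < lam) (hlm : lam < m₁)
    {q1 : 0 ≤ lam} {q2 : lam ≤ 1}
    (hpin : Indiff R (mix lam q1 q2 (delta ((1:ℝ), γ₀)) (delta ((0:ℝ), γ₀))) (delta (z, γ₀)))
    {r1 : 0 ≤ 1 - m₁} {r2 : 1 - m₁ ≤ 1} :
    R (mix (1 - m₁) r1 r2 (delta ((0:ℝ), γ₀)) (delta ((1:ℝ), γ₁))) (delta (z, γ₀)) := by
  have hl1 : lam < 1 := hlm.trans hm1
  have h1l : (0:ℝ) < 1 + lam := by linarith
  have hmul : 0 < lam * m₁ := mul_pos hl0 hm0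
  have hden : 0 < m₁ - lam * (1 - m₁) := by nlinarith
  have hα0 : 0 < lam / (m₁ * (1 + lam)) := div_pos hl0 (by positivity)
  have hα1 : lam / (m₁ * (1 + lam)) < 1 := by
    rw [div_lt_one (by positivity)]
    nlinarith
  have hμ0 : 0 < lam * m₁ / (m₁ - lam * (1 - m₁)) := div_pos hmul hden
  have hμ1 : lam * m₁ / (m₁ - lam * (1 - m₁)) < 1 := by
    rw [div_lt_one hden]; nlinarith
  have hS0 : 0 < 1 / (1 + lam) := by positivity
  have hS1 : 1 / (1 + lam) < 1 := by rw [div_lt_one h1l]; linarith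
  have hp0 : 0 < lam / m₁ := div_pos hl0 hm0
  have hp1 : lam / m₁ < 1 := (div_lt_one hm0).mpr hlm
  have hm1ne : m₁ ≠ 0 := ne_of_gt hm0
  have h1lne : (1:ℝ) + lam ≠ 0 := ne_of_gt h1l
  have hdenne : m₁ - lam * (1 - m₁) ≠ 0 := ne_of_gt hden
  have e1 : mix (lam / (m₁ * (1 + lam))) hα0.le hα1.le
      (mix (1 - m₁) r1 r2 (delta ((0:ℝ), γ₀)) (delta ((1:ℝ), γ₁)))
      (mix (lam * m₁ / (m₁ - lam * (1 - m₁))) hμ0.le hμ1.le (delta ((1:ℝ), γ₀)) (delta ((0:ℝ), γ₀))) =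
      mix (1 / (1 + lam)) hS0.le hS1.le
      (mix lam q1 q2 (delta ((1:ℝ), γ₀)) (delta ((0:ℝ), γ₀))) (delta ((1:ℝ), γ₁)) := by
    apply lottery_ext; ext x
    simp only [mix_val]
    field_simp
    ring
  have e2 : mix (1 / (1 + lam)) hS0.le hS1.le
      (mix (lam / m₁) hp0.le hp1.le (delta (z, γ₀)) (delta ((0:ℝ), γ₀))) (delta ((1:ℝ), γ₀)) =
      mix (lam / (m₁ * (1 + lam))) hα0.le hα1.le (delta (z, γ₀))
      (mix (lam * m₁ / (m₁ - lam * (1 - m₁))) hμ0.le hμ1.le (delta ((1:ℝ), γ₀)) (delta ((0:ℝ), γ₀))) := by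
    apply lottery_ext; ext x
    simp only [mix_val]
    field_simp
    ring
  have hAA' : Indiff R (mix (lam / (m₁ * (1 + lam))) hα0.le hα1.le
      (mix (1 - m₁) r1 r2 (delta ((0:ℝ), γ₀)) (delta ((1:ℝ), γ₁)))
      (mix (lam * m₁ / (m₁ - lam * (1 - m₁))) hμ0.le hμ1.le (delta ((1:ℝ), γ₀)) (delta ((0:ℝ), γ₀))))
      (mix (1 / (1 + lam)) hS0.le hS1.le (delta (z, γ₀)) (delta ((1:ℝ), γ₁))) := by
    rw [e1]
    exact indiff_mix_mono hG hS0 hS1 hpin (indiff_refl hG _)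
  have hcova : R (delta (z, γ₀))
      (mix (lam / m₁) hp0.le hp1.le (delta (z, γ₀)) (delta ((0:ℝ), γ₀))) := by
    have h := R_mix_mono hG hp0 hp1 (hG.refl (delta (z, γ₀))) (Rle' hG hz0 (le_refl γ₀))
    rwa [mix_self] at h
  have hcovb : R (delta ((1:ℝ), γ₁)) (delta ((1:ℝ), γ₀)) := Rle' hG (le_refl 1) hγ
  have hcov := R_mix_mono hG hS0 hS1 hcova hcovb
  have hA := hG.trans hAA'.1 hcov
  rw [e2] at hA
  exact (ind_iff hG _ (delta (z, γ₀)) _ hα0 hα1).mpr hA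

/-- Bridge lemma, case γ₁ ≤ γ₀. -/
lemma bridge_II (hG : Good R) {m₁ γ₀ γ₁ z lam : ℝ}
    (hm0 : 0 < m₁) (hm1 : m₁ < 1) (hγ : γ₁ ≤ γ₀) (hz0 : 0 ≤ z)
    (hl0 : 0 < lam) (hlm : lam < m₁)
    {q1 : 0 ≤ lam} {q2 : lam ≤ 1}
    (hpin : Indiff R (mix lam q1 q2 (delta ((1:ℝ), γ₁)) (delta ((0:ℝ), γ₁))) (delta (z, γ₁)))
    {r1 : 0 ≤ 1 - m₁} {r2 : 1 - m₁ ≤ 1} :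
    R (mix (1 - m₁) r1 r2 (delta ((0:ℝ), γ₀)) (delta ((1:ℝ), γ₁))) (delta (z, γ₁)) := by
  have hl1 : lam < 1 := hlm.trans hm1
  have hlm₀ : 0 < lam * (1 - m₁) := mul_pos hl0 (by linarith)
  have hD0 : 0 < m₁ + lam * (1 - m₁) := by linarith
  have hDlam : lam < m₁ + lam * (1 - m₁) := by nlinarith
  have h2D0 : 0 < 2 * (m₁ + lam * (1 - m₁)) := by linarith
  have h2Dm : 0 < 2 * (m₁ + lam * (1 - m₁)) - m₁ := by linarith
  have h2Dlam : 0 < 2 * (m₁ + lam * (1 - m₁)) - lam := by linarith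
  have hα0 : 0 < lam / (2 * (m₁ + lam * (1 - m₁))) := div_pos hl0 h2D0
  have hα1 : lam / (2 * (m₁ + lam * (1 - m₁))) < 1 := by
    rw [div_lt_one h2D0]; linarith
  have hμ0 : 0 < (m₁ + lam * (1 - m₁) - lam) / (2 * (m₁ + lam * (1 - m₁)) - lam) :=
    div_pos (by linarith) h2Dlam
  have hμ1 : (m₁ + lam * (1 - m₁) - lam) / (2 * (m₁ + lam * (1 - m₁)) - lam) < 1 := by
    rw [div_lt_one h2Dlam]; linarith
  have hθ0 : 0 < (m₁ + lam * (1 - m₁)) / (2 * (m₁ + lam * (1 - m₁)) - m₁) :=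
    div_pos hD0 h2Dm
  have hθ1 : (m₁ + lam * (1 - m₁)) / (2 * (m₁ + lam * (1 - m₁)) - m₁) < 1 := by
    rw [div_lt_one h2Dm]; nlinarith
  have hS0 : 0 < m₁ / (2 * (m₁ + lam * (1 - m₁))) := div_pos hm0 h2D0
  have hS1 : m₁ / (2 * (m₁ + lam * (1 - m₁))) < 1 := by
    rw [div_lt_one h2D0]; linarith
  have hp0 : 0 < lam / m₁ := div_pos hl0 hm0
  have hp1 : lam / m₁ < 1 := (div_lt_one hm0).mpr hlm
  have hm1ne : m₁ ≠ 0 := ne_of_gt hm0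
  have h2D0ne : 2 * (m₁ + lam * (1 - m₁)) ≠ 0 := ne_of_gt h2D0
  have h2Dmne : 2 * (m₁ + lam * (1 - m₁)) - m₁ ≠ 0 := ne_of_gt h2Dm
  have h2Dlamne : 2 * (m₁ + lam * (1 - m₁)) - lam ≠ 0 := ne_of_gt h2Dlam
  have e1 : mix (lam / (2 * (m₁ + lam * (1 - m₁)))) hα0.le hα1.le
      (mix (1 - m₁) r1 r2 (delta ((0:ℝ), γ₀)) (delta ((1:ℝ), γ₁)))
      (mix ((m₁ + lam * (1 - m₁) - lam) / (2 * (m₁ + lam * (1 - m₁)) - lam)) hμ0.le hμ1.le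
        (delta ((0:ℝ), γ₁)) (delta ((1:ℝ), γ₁))) =
      mix (m₁ / (2 * (m₁ + lam * (1 - m₁)))) hS0.le hS1.le
      (mix lam q1 q2 (delta ((1:ℝ), γ₁)) (delta ((0:ℝ), γ₁)))
      (mix ((m₁ + lam * (1 - m₁)) / (2 * (m₁ + lam * (1 - m₁)) - m₁)) hθ0.le hθ1.le
        (delta ((1:ℝ), γ₁)) (delta ((0:ℝ), γ₀))) := by
    apply lottery_ext; ext x
    simp only [mix_val]
    field_simp
    ring
  have e2 : mix (m₁ / (2 * (m₁ + lam * (1 - m₁)))) hS0.le hS1.le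
      (mix (lam / m₁) hp0.le hp1.le (delta (z, γ₁)) (delta ((0:ℝ), γ₁)))
      (mix ((m₁ + lam * (1 - m₁)) / (2 * (m₁ + lam * (1 - m₁)) - m₁)) hθ0.le hθ1.le
        (delta ((1:ℝ), γ₁)) (delta ((0:ℝ), γ₁))) =
      mix (lam / (2 * (m₁ + lam * (1 - m₁)))) hα0.le hα1.le (delta (z, γ₁))
      (mix ((m₁ + lam * (1 - m₁) - lam) / (2 * (m₁ + lam * (1 - m₁)) - lam)) hμ0.le hμ1.le
        (delta ((0:ℝ), γ₁)) (delta ((1:ℝ), γ₁))) := by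
    apply lottery_ext; ext x
    simp only [mix_val]
    field_simp
    ring
  have hAA' : Indiff R (mix (lam / (2 * (m₁ + lam * (1 - m₁)))) hα0.le hα1.le
      (mix (1 - m₁) r1 r2 (delta ((0:ℝ), γ₀)) (delta ((1:ℝ), γ₁)))
      (mix ((m₁ + lam * (1 - m₁) - lam) / (2 * (m₁ + lam * (1 - m₁)) - lam)) hμ0.le hμ1.le
        (delta ((0:ℝ), γ₁)) (delta ((1:ℝ), γ₁))))
      (mix (m₁ / (2 * (m₁ + lam * (1 - m₁)))) hS0.le hS1.le (delta (z, γ₁))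
      (mix ((m₁ + lam * (1 - m₁)) / (2 * (m₁ + lam * (1 - m₁)) - m₁)) hθ0.le hθ1.le
        (delta ((1:ℝ), γ₁)) (delta ((0:ℝ), γ₀)))) := by
    rw [e1]
    exact indiff_mix_mono hG hS0 hS1 hpin (indiff_refl hG _)
  have hcova : R (delta (z, γ₁))
      (mix (lam / m₁) hp0.le hp1.le (delta (z, γ₁)) (delta ((0:ℝ), γ₁))) := by
    have h := R_mix_mono hG hp0 hp1 (hG.refl (delta (z, γ₁))) (Rle' hG hz0 (le_refl γ₁))
    rwa [mix_self] at h
  have hcovw : R (mix ((m₁ + lam * (1 - m₁)) / (2 * (m₁ + lam * (1 - m₁)) - m₁)) hθ0.le hθ1.le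
        (delta ((1:ℝ), γ₁)) (delta ((0:ℝ), γ₀)))
      (mix ((m₁ + lam * (1 - m₁)) / (2 * (m₁ + lam * (1 - m₁)) - m₁)) hθ0.le hθ1.le
        (delta ((1:ℝ), γ₁)) (delta ((0:ℝ), γ₁))) :=
    R_mix_mono hG hθ0 hθ1 (hG.refl _) (Rle' hG (le_refl 0) hγ)
  have hcov := R_mix_mono hG hS0 hS1 hcova hcovw
  have hA := hG.trans hAA'.1 hcov
  rw [e2] at hA
  exact (ind_iff hG _ (delta (z, γ₁)) _ hα0 hα1).mpr hA

end S6

/-- There is no preorder on Δ satisfying Pareto, Converse Pareto,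
Unidimensional Continuity, Unidimensional Certainty Equivalents, Independence, and
Negative Dominance. -/
theorem statement6 :
    ¬ ∃ R : Lottery (ℝ × ℝ) → Lottery (ℝ × ℝ) → Prop,
      Reflexive R ∧ Transitive R ∧ Pareto R ∧ ConvPareto R ∧
      UnidimCont R ∧ UnidimCE R ∧ Independence R ∧ NegDominance R := by
  rintro ⟨R, hrefl, htrans, hPar, hCPar, hUCont, hUCE, hInd, hND⟩
  have hG : S6.Good R := ⟨hrefl, htrans, hPar, hCPar, hUCont, hUCE, hInd, hND⟩
  have hhalf0 : (0:ℝ) < 1/2 := by norm_num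
  have hhalf1 : (1:ℝ)/2 < 1 := by norm_num
  have h01 : (0:ℝ) < 1 := one_pos
  -- c : the certainty equivalent of the half-half gamble between (1,0) and (0,0)
  obtain ⟨c, hc0, hc1, hc⟩ := S6.row_CE hG (y := 0) h01 hhalf0 hhalf1
  -- κ : the weight pinning the gamble on row 1 at target c/2
  obtain ⟨κ, hκ0, hκ1, hκ⟩ := S6.pin_row hG (y := 1)
    (by linarith : (0:ℝ) < c/2) (by linarith : c/2 < 1)
  -- the weight v on the bottom row
  set v : ℝ := if κ < 1/2 then 1 - κ else (1 + κ)/2 with hv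
  have hv0 : 0 < v := by rw [hv]; split_ifs <;> linarith
  have hv1 : v < 1 := by rw [hv]; split_ifs <;> linarith
  have hκv : κ < v := by rw [hv]; split_ifs with h <;> linarith
  set m₁ : ℝ := (v + κ)/2 with hm₁def
  have hm₁0 : 0 < m₁ := by rw [hm₁def]; linarith
  have hm₁1 : m₁ < 1 := by rw [hm₁def]; linarith
  have hm₁v : m₁ < v := by rw [hm₁def]; linarith
  have hm₁half : 1/2 ≤ m₁ := by
    rw [hm₁def, hv]; split_ifs <;> linarith
  -- ρ : CE of the m₁-gamble on row 0
  obtain ⟨ρ, hρ0, hρ1, hρ⟩ := S6.row_CE hG (y := 0) h01 hm₁0 hm₁1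
  have hcρ : c ≤ ρ := S6.row_CE_le hG h01 hhalf0 hm₁half hm₁1 hc hρ hc1
  -- τ₀ : CE of the v-gamble on row 0
  obtain ⟨τ₀, hτ₀0, hτ₀1, hτ₀⟩ := S6.row_CE hG (y := 0) h01 hv0 hv1
  have hρτ₀ : ρ < τ₀ := S6.row_CE_lt hG h01 hm₁0 hm₁v hv1 hρ hτ₀ hρ1
  -- the column lotteries
  have hvκ0 : (0:ℝ) < v + κ := by linarith
  have hvκ2 : (0:ℝ) < 2 - v - κ := by linarith
  have hvκ0' : v + κ ≠ 0 := ne_of_gt hvκ0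
  have hvκ2' : 2 - v - κ ≠ 0 := ne_of_gt hvκ2
  set p₀ : ℝ := (1 - κ)/(2 - v - κ) with hp₀def
  set p₁ : ℝ := κ/(v + κ) with hp₁def
  have hp₀0 : 0 < p₀ := by rw [hp₀def]; apply div_pos <;> linarith
  have hp₀1 : p₀ < 1 := by rw [hp₀def, div_lt_one hvκ2]; linarith
  have hp₁0 : 0 < p₁ := by rw [hp₁def]; exact div_pos hκ0 hvκ0
  have hp₁1 : p₁ < 1 := by rw [hp₁def, div_lt_one hvκ0]; linarith
  obtain ⟨γ₀, hγ₀0, hγ₀1, hγ₀⟩ := S6.col_CE hG (x := 0) h01 hp₀0 hp₀1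
  obtain ⟨γ₁, hγ₁0, hγ₁1, hγ₁⟩ := S6.col_CE hG (x := 1) h01 hp₁0 hp₁1
  -- L ~ Q
  have hLQ := S6.indiff_mix_mono hG hhalf0 hhalf1 hτ₀ hκ
  -- L = mix m₀ C₀ C₁
  have hm₀0 : (0:ℝ) < 1 - m₁ := by linarith
  have hm₀1 : 1 - m₁ < 1 := by linarith
  have eL : mix (1/2) hhalf0.le hhalf1.le
      (mix v hv0.le hv1.le (delta ((1:ℝ), (0:ℝ))) (delta ((0:ℝ), (0:ℝ))))
      (mix κ hκ0.le hκ1.le (delta ((1:ℝ), (1:ℝ))) (delta ((0:ℝ), (1:ℝ)))) =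
      mix (1 - m₁) hm₀0.le hm₀1.le
      (mix p₀ hp₀0.le hp₀1.le (delta ((0:ℝ), (1:ℝ))) (delta ((0:ℝ), (0:ℝ))))
      (mix p₁ hp₁0.le hp₁1.le (delta ((1:ℝ), (1:ℝ))) (delta ((1:ℝ), (0:ℝ)))) := by
    apply S6.lottery_ext; ext x
    simp only [S6.mix_val, hm₁def, hp₀def, hp₁def]
    field_simp
    ring
  have hLP : Indiff R
      (mix (1/2) hhalf0.le hhalf1.le
        (mix v hv0.le hv1.le (delta ((1:ℝ), (0:ℝ))) (delta ((0:ℝ), (0:ℝ))))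
        (mix κ hκ0.le hκ1.le (delta ((1:ℝ), (1:ℝ))) (delta ((0:ℝ), (1:ℝ)))))
      (mix (1 - m₁) hm₀0.le hm₀1.le (delta ((0:ℝ), γ₀)) (delta ((1:ℝ), γ₁))) := by
    have h := S6.indiff_mix_mono hG hm₀0 hm₀1 hγ₀ hγ₁
    rw [← eL] at h
    exact h
  have hQP : R (mix (1/2) hhalf0.le hhalf1.le (delta (τ₀, (0:ℝ))) (delta (c/2, (1:ℝ))))
      (mix (1 - m₁) hm₀0.le hm₀1.le (delta ((0:ℝ), γ₀)) (delta ((1:ℝ), γ₁))) :=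
    hG.trans hLQ.2 hLP.1
  have hτ1ρ : c/2 < ρ := by linarith
  rcases le_total γ₀ γ₁ with hcase | hcase
  · -- bridge at row γ₀
    obtain ⟨chat, hchat0, hchat1, hchat⟩ := S6.row_CE hG (y := γ₀) h01 hm₁0 hm₁1
    have hρchat : ρ ≤ chat := S6.row_CE_cross hG hm₁0 hm₁1 hγ₀0.le hchat hρ
    have hmingt : c/2 < min τ₀ chat := lt_min (by linarith) (by linarith)
    set z : ℝ := (c/2 + min τ₀ chat)/2 with hzdef
    have hz₁ : c/2 < z := by rw [hzdef]; linarith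
    have hzτ₀ : z < τ₀ := by
      rw [hzdef]; have h := min_le_left τ₀ chat; linarith
    have hzchat : z < chat := by
      rw [hzdef]; have h := min_le_right τ₀ chat; linarith
    have hz0 : (0:ℝ) < z := by linarith
    have hz1 : z < 1 := by linarith
    obtain ⟨lam, hl0, hl1, hpin⟩ := S6.pin_row hG (y := γ₀) hz0 hz1
    have hlm : lam < m₁ := by
      by_contra hcon
      push_neg at hcon
      have := S6.row_CE_le hG h01 hm₁0 hcon hl1 hchat hpin hchat1
      linarith
    have hPz := S6.bridge_I hG hm₁0 hm₁1 hcase hz0.le hl0 hlm hpin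
      (r1 := hm₀0.le) (r2 := hm₀1.le)
    exact S6.box hG hz₁ hγ₀0 (hG.trans hQP hPz)
  · -- bridge at row γ₁
    obtain ⟨chat, hchat0, hchat1, hchat⟩ := S6.row_CE hG (y := γ₁) h01 hm₁0 hm₁1
    have hρchat : ρ ≤ chat := S6.row_CE_cross hG hm₁0 hm₁1 hγ₁0.le hchat hρ
    have hmingt : c/2 < min τ₀ chat := lt_min (by linarith) (by linarith)
    set z : ℝ := (c/2 + min τ₀ chat)/2 with hzdef
    have hz₁ : c/2 < z := by rw [hzdef]; linarith
    have hzτ₀ : z < τ₀ := by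
      rw [hzdef]; have h := min_le_left τ₀ chat; linarith
    have hzchat : z < chat := by
      rw [hzdef]; have h := min_le_right τ₀ chat; linarith
    have hz0 : (0:ℝ) < z := by linarith
    have hz1 : z < 1 := by linarith
    obtain ⟨lam, hl0, hl1, hpin⟩ := S6.pin_row hG (y := γ₁) hz0 hz1
    have hlm : lam < m₁ := by
      by_contra hcon
      push_neg at hcon
      have := S6.row_CE_le hG h01 hm₁0 hcon hl1 hchat hpin hchat1
      linarith
    have hPz := S6.bridge_II hG hm₁0 hm₁1 hcase hz0.le hl0 hlm hpin
      (r1 := hm₀0.le) (r2 := hm₀1.le)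
    exact S6.box hG hz₁ hγ₁0 (hG.trans hQP hPz)
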